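/- arXiv:2309.08445 — 2 statements merged into one kernel-verified Lean document; each statement's English description precedes it below -/
import Mathlib

section
/- Let β > 0, m ≥ 1 an integer, and c ∈ ℝ with c < 0 or c > 1. Suppose ψ, φ₁, φ₂ : [0,1] → ℂ are C² functions vanishing at y = 0 and y = 1, and ρ : [0,1] → ℂ is continuous, such that, writing ω(y) = ψ''(y) − m²ψ(y), the following hold for all y ∈ (0,1): (y−c)²·ω(y) − β²·ψ(y) + 2(y−c)·β²·ρ(y) = 0; φ₁''(y) − m²φ₁(y) = (y−c)·ω(y); φ₂''(y) − m²φ₂(y) = ρ(y); and −φ₁(y) − (y−c)·ψ(y) + (y−c)²·ρ(y) − β²·φ₂(y) = 0. Then ψ''(y) − m²ψ(y) + β²·ψ(y)/(y−c)² = 0 for all y ∈ (0,1). (Equivalently: for c < 0 or c > 1, every generalized eigenvector in ker(L_m − c)² already lies in ker(L_m − c), so the discrete eigenvalue c is semi-simple.) -/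
/-- Semi-simplicity of discrete eigenvalues: for `β > 0`, `m ≥ 1` and real `c` with `c < 0` or
`c > 1`, if `ψ, φ₁, φ₂ : [0,1] → ℂ` are `C²` (with the indicated derivatives), vanish at `0`
and `1`, `ρ` is continuous, `ω = ψ'' - m²ψ`, and on `(0,1)`:
`(y-c)² ω - β² ψ + 2(y-c) β² ρ = 0`, `φ₁'' - m²φ₁ = (y-c) ω`, `φ₂'' - m²φ₂ = ρ`,
`-φ₁ - (y-c) ψ + (y-c)² ρ - β² φ₂ = 0`, then `ψ'' - m²ψ + β²ψ/(y-c)² = 0` on `(0,1)`. -/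
theorem stmt15 (β : ℝ) (hβ0 : 0 < β) (m : ℕ) (hm : 1 ≤ m)
    (c : ℝ) (hc : c < 0 ∨ 1 < c)
    (ψ ψ' ψ'' φ₁ φ₁' φ₁'' φ₂ φ₂' φ₂'' ρ : ℝ → ℂ)
    (hψ : ContinuousOn ψ (Set.Icc 0 1))
    (hψ' : ContinuousOn ψ' (Set.Icc 0 1))
    (hψ'' : ContinuousOn ψ'' (Set.Icc 0 1))
    (hφ₁ : ContinuousOn φ₁ (Set.Icc 0 1))
    (hφ₁' : ContinuousOn φ₁' (Set.Icc 0 1))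
    (hφ₁'' : ContinuousOn φ₁'' (Set.Icc 0 1))
    (hφ₂ : ContinuousOn φ₂ (Set.Icc 0 1))
    (hφ₂' : ContinuousOn φ₂' (Set.Icc 0 1))
    (hφ₂'' : ContinuousOn φ₂'' (Set.Icc 0 1))
    (hρ : ContinuousOn ρ (Set.Icc 0 1))
    (hdψ1 : ∀ y ∈ Set.Ioo (0 : ℝ) 1, HasDerivAt ψ (ψ' y) y)
    (hdψ2 : ∀ y ∈ Set.Ioo (0 : ℝ) 1, HasDerivAt ψ' (ψ'' y) y)
    (hdφ₁1 : ∀ y ∈ Set.Ioo (0 : ℝ) 1, HasDerivAt φ₁ (φ₁' y) y)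
    (hdφ₁2 : ∀ y ∈ Set.Ioo (0 : ℝ) 1, HasDerivAt φ₁' (φ₁'' y) y)
    (hdφ₂1 : ∀ y ∈ Set.Ioo (0 : ℝ) 1, HasDerivAt φ₂ (φ₂' y) y)
    (hdφ₂2 : ∀ y ∈ Set.Ioo (0 : ℝ) 1, HasDerivAt φ₂' (φ₂'' y) y)
    (hψ0 : ψ 0 = 0) (hψ1 : ψ 1 = 0)
    (hφ₁0 : φ₁ 0 = 0) (hφ₁1 : φ₁ 1 = 0)
    (hφ₂0 : φ₂ 0 = 0) (hφ₂1 : φ₂ 1 = 0)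
    (heq1 : ∀ y ∈ Set.Ioo (0 : ℝ) 1,
      ((y : ℂ) - (c : ℂ)) ^ 2 * (ψ'' y - (m : ℂ) ^ 2 * ψ y) - (β : ℂ) ^ 2 * ψ y +
        2 * ((y : ℂ) - (c : ℂ)) * (β : ℂ) ^ 2 * ρ y = 0)
    (heq2 : ∀ y ∈ Set.Ioo (0 : ℝ) 1,
      φ₁'' y - (m : ℂ) ^ 2 * φ₁ y = ((y : ℂ) - (c : ℂ)) * (ψ'' y - (m : ℂ) ^ 2 * ψ y))
    (heq3 : ∀ y ∈ Set.Ioo (0 : ℝ) 1, φ₂'' y - (m : ℂ) ^ 2 * φ₂ y = ρ y)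
    (heq4 : ∀ y ∈ Set.Ioo (0 : ℝ) 1,
      -φ₁ y - ((y : ℂ) - (c : ℂ)) * ψ y + ((y : ℂ) - (c : ℂ)) ^ 2 * ρ y -
        (β : ℂ) ^ 2 * φ₂ y = 0) :
    ∀ y ∈ Set.Ioo (0 : ℝ) 1,
      ψ'' y - (m : ℂ) ^ 2 * ψ y + (β : ℂ) ^ 2 * ψ y / ((y : ℂ) - (c : ℂ)) ^ 2 = 0 := by
  
  intro y hy
  have hy01 : y ∈ Set.Icc (0:ℝ) 1 := Set.Ioo_subset_Icc_self hy
  -- (y - c) never vanishes on [0,1]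
  have haR : ∀ z ∈ Set.Icc (0:ℝ) 1, z - c ≠ 0 := by
    intro z hz
    rcases hc with h | h
    · nlinarith [hz.1]
    · nlinarith [hz.2]
  have haC : ∀ z ∈ Set.Icc (0:ℝ) 1, ((z : ℂ) - (c : ℂ)) ≠ 0 := by
    intro z hz
    have : ((z - c : ℝ) : ℂ) ≠ 0 := Complex.ofReal_ne_zero.2 (haR z hz)
    simpa using this
  -- the combination F = φ₁ + β² φ₂ and its derivatives
  set F : ℝ → ℂ := fun z => φ₁ z + (β : ℂ) ^ 2 * φ₂ z with hFdef
  set Fd : ℝ → ℂ := fun z => φ₁' z + (β : ℂ) ^ 2 * φ₂' z with hFddef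
  set Fdd : ℝ → ℂ := fun z => φ₁'' z + (β : ℂ) ^ 2 * φ₂'' z with hFdddef
  -- F satisfies the Taylor–Goldstein equation
  have hFeq : ∀ z ∈ Set.Ioo (0:ℝ) 1,
      Fdd z - (m : ℂ) ^ 2 * F z + (β : ℂ) ^ 2 * F z / ((z : ℂ) - c) ^ 2 = 0 := by
    intro z hz
    have ha := haC z (Set.Ioo_subset_Icc_self hz)
    have e1 := heq1 z hz
    have e2 := heq2 z hz
    have e3 := heq3 z hz
    have e4 := heq4 z hz
    simp only [hFdef, hFddef, hFdddef]
    field_simp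
    linear_combination ((z:ℂ)-c)^2 * e2 + ((z:ℂ)-c)^2 * (β:ℂ)^2 * e3
      - (β:ℂ)^2 * e4 + ((z:ℂ)-c) * e1
  -- Wronskian-type functions
  set W : ℝ → ℂ := fun z => ψ z * (starRingEnd ℂ) (Fd z) - ψ' z * (starRingEnd ℂ) (F z)
    with hWdef
  set g : ℝ → ℂ := fun z => ψ z * (starRingEnd ℂ) (Fdd z) - ψ'' z * (starRingEnd ℂ) (F z)
    with hgdef
  have hFcont : ContinuousOn F (Set.Icc 0 1) := hφ₁.add (continuousOn_const.mul hφ₂)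
  have hFdcont : ContinuousOn Fd (Set.Icc 0 1) := hφ₁'.add (continuousOn_const.mul hφ₂')
  have hFddcont : ContinuousOn Fdd (Set.Icc 0 1) := hφ₁''.add (continuousOn_const.mul hφ₂'')
  have hWcont : ContinuousOn W (Set.Icc 0 1) :=
    (hψ.mul hFdcont.star).sub (hψ'.mul hFcont.star)
  have hgcont : ContinuousOn g (Set.Icc 0 1) :=
    (hψ.mul hFddcont.star).sub (hψ''.mul hFcont.star)
  have hWderiv : ∀ z ∈ Set.Ioo (0:ℝ) 1, HasDerivAt W (g z) z := by
    intro z hz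
    have hF1 : HasDerivAt F (Fd z) z :=
      (hdφ₁1 z hz).add ((hdφ₂1 z hz).const_mul ((β:ℂ)^2))
    have hF2 : HasDerivAt Fd (Fdd z) z :=
      (hdφ₁2 z hz).add ((hdφ₂2 z hz).const_mul ((β:ℂ)^2))
    have hcF1 : HasDerivAt (fun w => (starRingEnd ℂ) (F w)) ((starRingEnd ℂ) (Fd z)) z := by
      simpa only [starRingEnd_apply] using hF1.star
    have hcF2 : HasDerivAt (fun w => (starRingEnd ℂ) (Fd w)) ((starRingEnd ℂ) (Fdd z)) z := by
      simpa only [starRingEnd_apply] using hF2.star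
    have h1 := (hdψ1 z hz).mul hcF2
    have h2 := (hdψ2 z hz).mul hcF1
    have := h1.sub h2
    convert this using 1
    · rfl
    · rfl
    simp only [hgdef]
    ring
  -- fundamental theorem of calculus for W
  have hgint : IntervalIntegrable g MeasureTheory.volume 0 1 :=
    hgcont.intervalIntegrable_of_Icc (by norm_num)
  have hFTC : ∫ z in (0:ℝ)..1, g z = W 1 - W 0 :=
    intervalIntegral.integral_eq_sub_of_hasDeriv_right_of_le (by norm_num) hWcont
      (fun z hz => (hWderiv z hz).hasDerivWithinAt) hgint
  have hW0 : W 0 = 0 := by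
    simp [hWdef, hFdef, hψ0, hφ₁0, hφ₂0]
  have hW1 : W 1 = 0 := by
    simp [hWdef, hFdef, hψ1, hφ₁1, hφ₂1]
  have hIg : ∫ z in (0:ℝ)..1, g z = 0 := by rw [hFTC, hW0, hW1, sub_zero]
  -- the real-valued integrand
  set h : ℝ → ℝ := fun z => 2 * β ^ 2 * Complex.normSq (F z) / (z - c) ^ 3 with hhdef
  have hgh : ∀ z ∈ Set.Ioo (0:ℝ) 1, g z = ((h z : ℝ) : ℂ) := by
    intro z hz
    have ha := haC z (Set.Ioo_subset_Icc_self hz)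
    have e1 := heq1 z hz
    have e4 := heq4 z hz
    -- conjugate of the F-equation
    have hconj := congrArg (starRingEnd ℂ) (hFeq z hz)
    simp only [map_sub, map_add, map_mul, map_div₀, map_pow, map_zero,
      Complex.conj_ofReal, map_natCast] at hconj
    have hconj2 : ((z:ℂ)-c)^2 * (starRingEnd ℂ) (Fdd z)
        - (m:ℂ)^2 * ((z:ℂ)-c)^2 * (starRingEnd ℂ) (F z)
        + (β:ℂ)^2 * (starRingEnd ℂ) (F z) = 0 := by
      field_simp at hconj
      linear_combination hconj
    have hmc : g z = 2*(β:ℂ)^2 * ((Complex.normSq (F z) : ℝ) : ℂ) / ((z:ℂ)-c)^3 := by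
      rw [← Complex.mul_conj]
      simp only [hgdef, hFdef]
      simp only [hFdef] at hconj2
      rw [eq_div_iff (pow_ne_zero 3 ha)]
      linear_combination ((z:ℂ)-c) * ψ z * hconj2
        - ((z:ℂ)-c) * (starRingEnd ℂ) (φ₁ z + (β:ℂ)^2 * φ₂ z) * e1
        + 2*(β:ℂ)^2 * (starRingEnd ℂ) (φ₁ z + (β:ℂ)^2 * φ₂ z) * e4
    rw [hmc]
    simp only [hhdef]
    push_cast
    ring
  -- ∫ h = 0
  have hIg' : ∫ z in (0:ℝ)..1, ((h z : ℝ) : ℂ) = 0 := by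
    rw [← hIg]
    apply intervalIntegral.integral_congr_ae
    have h1 : (MeasureTheory.volume : MeasureTheory.Measure ℝ) {(1:ℝ)} = 0 :=
      MeasureTheory.measure_singleton 1
    filter_upwards [MeasureTheory.measure_eq_zero_iff_ae_notMem.mp h1] with x hx hmem
    have hx1 : x ≠ 1 := by simpa using hx
    rw [Set.uIoc_of_le (by norm_num : (0:ℝ) ≤ 1)] at hmem
    exact (hgh x ⟨hmem.1, lt_of_le_of_ne hmem.2 hx1⟩).symm
  have hIh : ∫ z in (0:ℝ)..1, h z = 0 := by
    have := hIg'
    rw [intervalIntegral.integral_ofReal] at this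
    exact_mod_cast this
  -- h is continuous on [0,1]
  have hhcont : ContinuousOn h (Set.Icc 0 1) := by
    apply ContinuousOn.div
    · exact continuousOn_const.mul (Complex.continuous_normSq.comp_continuousOn hFcont)
    · exact ((continuous_id.sub continuous_const).pow 3).continuousOn
    · intro z hz
      exact pow_ne_zero 3 (haR z hz)
  -- F vanishes on (0,1)
  have hF0 : ∀ z ∈ Set.Ioo (0:ℝ) 1, F z = 0 := by
    intro z hz
    by_contra hFz
    have hns : 0 < Complex.normSq (F z) := Complex.normSq_pos.2 hFz
    rcases hc with hcneg | hcbig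
    · -- c < 0 : h ≥ 0, strict at z
      have hle : ∀ x ∈ Set.Ioc (0:ℝ) 1, (0:ℝ) ≤ h x := by
        intro x hx
        have hx0 : (0:ℝ) < x - c := by linarith [hx.1]
        have hcube : (0:ℝ) < (x - c) ^ 3 := by positivity
        exact div_nonneg (mul_nonneg (by positivity) (Complex.normSq_nonneg _)) hcube.le
      have hz0 : (0:ℝ) < h z := by
        have hx0 : (0:ℝ) < z - c := by linarith [hz.1]
        have hcube : (0:ℝ) < (z - c) ^ 3 := by positivity
        exact div_pos (mul_pos (mul_pos two_pos (pow_pos hβ0 2)) hns) hcube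
      have hlt := intervalIntegral.integral_lt_integral_of_continuousOn_of_le_of_exists_lt
        (by norm_num : (0:ℝ) < 1) continuousOn_const hhcont hle
        ⟨z, Set.Ioo_subset_Icc_self hz, hz0⟩
      rw [intervalIntegral.integral_zero, hIh] at hlt
      exact lt_irrefl 0 hlt
    · -- c > 1 : h ≤ 0, strict at z
      have hle : ∀ x ∈ Set.Ioc (0:ℝ) 1, (0:ℝ) ≤ -h x := by
        intro x hx
        have hx0 : x - c < 0 := by linarith [hx.2]
        have hcube : (x - c) ^ 3 < 0 := (Odd.pow_neg (by decide)) hx0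
        have : h x ≤ 0 :=
          div_nonpos_iff.2 (Or.inl ⟨mul_nonneg (by positivity) (Complex.normSq_nonneg _), hcube.le⟩)
        linarith
      have hz0 : (0:ℝ) < -h z := by
        have hx0 : z - c < 0 := by linarith [hz.2]
        have hcube : (z - c) ^ 3 < 0 := (Odd.pow_neg (by decide)) hx0
        have : h z < 0 := div_neg_of_pos_of_neg (mul_pos (mul_pos two_pos (pow_pos hβ0 2)) hns) hcube
        linarith
      have hIhn : ∫ x in (0:ℝ)..1, -h x = 0 := by
        rw [intervalIntegral.integral_neg, hIh, neg_zero]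
      have hlt := intervalIntegral.integral_lt_integral_of_continuousOn_of_le_of_exists_lt
        (by norm_num : (0:ℝ) < 1) continuousOn_const hhcont.neg hle
        ⟨z, Set.Ioo_subset_Icc_self hz, hz0⟩
      rw [intervalIntegral.integral_zero, show (∫ x in (0:ℝ)..1, (-h) x) = 0 from hIhn] at hlt
      exact lt_irrefl 0 hlt
  -- conclude
  have hFy : F y = 0 := hF0 y hy
  have ha := haC y hy01
  have hkey : ((y:ℂ) - c) * ρ y = ψ y := by
    have h' : ((y:ℂ) - c) * (((y:ℂ) - c) * ρ y - ψ y) = 0 := by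
      have e4 := heq4 y hy
      have : φ₁ y + (β:ℂ)^2 * φ₂ y = 0 := hFy
      linear_combination e4 + this
    rcases mul_eq_zero.mp h' with h | h
    · exact absurd h ha
    · exact sub_eq_zero.mp h
  have e1 := heq1 y hy
  field_simp
  linear_combination e1 - 2*(β:ℂ)^2 * hkey
end

section
/- Assume β² = 1/4, let m ≥ 1 be an integer, y₀ ≤ 0 and ε ∈ (0,1]. Let φ : [0,1] → ℂ be C² with φ(0) = φ(1) = 0 and φ''(y) − m²φ(y) + (1/4)·φ(y)/(y−y₀+iε)² = F(y) on (0,1), with F continuous. Then (ε²/(1+ε²))·‖φ'‖²_{L²(0,1)} + m²·‖φ‖²_{L²(0,1)} ≤ C·m^{−2}·‖F‖²_{L²(0,1)} for an absolute constant C, and moreover 0 ≤ ∫₀¹ ε(y−y₀)/((y−y₀)²+ε²)² · |φ(y)|² dy ≤ 2·‖φ‖_{L²(0,1)}·‖F‖_{L²(0,1)}. -/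
open MeasureTheory Set

lemma intg_of_bdd {E : Type*} [NormedAddCommGroup E] {f : ℝ → E}
    (hm : ContinuousOn f (Set.Ioo (0:ℝ) 1))
    {C : ℝ} (hC : ∀ y ∈ Set.Ioo (0:ℝ) 1, ‖f y‖ ≤ C) : IntegrableOn f (Set.Ioo (0:ℝ) 1) := by
  refine Integrable.mono' (g := fun _ => C)
    (integrableOn_const (by simp)) (hm.aestronglyMeasurable measurableSet_Ioo) ?_
  refine (ae_restrict_iff' measurableSet_Ioo).2 ?_
  filter_upwards with y hy using hC y hy

lemma memL2_of_bdd {f : ℝ → ℝ} (hm : ContinuousOn f (Set.Ioo (0:ℝ) 1))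
    {C : ℝ} (hC : ∀ y ∈ Set.Ioo (0:ℝ) 1, |f y| ≤ C) :
    MemLp f 2 (volume.restrict (Set.Ioo (0:ℝ) 1)) := by
  haveI : IsFiniteMeasure (volume.restrict (Set.Ioo (0:ℝ) 1)) := by
    constructor; rw [Measure.restrict_apply_univ]; simp
  refine MemLp.of_bound (hm.aestronglyMeasurable measurableSet_Ioo) C ?_
  refine (ae_restrict_iff' measurableSet_Ioo).2 ?_
  filter_upwards with y hy
  simpa [Real.norm_eq_abs] using hC y hy

lemma cs_help {μ : Measure ℝ} {f g : ℝ → ℝ} (hf : MemLp f 2 μ) (hg : MemLp g 2 μ)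
    (hf0 : 0 ≤ᵐ[μ] f) (hg0 : 0 ≤ᵐ[μ] g) :
    ∫ a, f a * g a ∂μ ≤ Real.sqrt (∫ a, f a ^ 2 ∂μ) * Real.sqrt (∫ a, g a ^ 2 ∂μ) := by
  have hpq : Real.HolderConjugate 2 2 := Real.HolderConjugate.two_two
  have := MeasureTheory.integral_mul_le_Lp_mul_Lq_of_nonneg hpq hf0 hg0
    (by simpa using hf) (by simpa using hg)
  have e1 : (∫ a, f a ^ (2:ℝ) ∂μ) = ∫ a, f a ^ 2 ∂μ := by
    refine integral_congr_ae ?_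
    filter_upwards [hf0] with x hx
    rw [← Real.rpow_natCast (f x) 2]; norm_num
  have e2 : (∫ a, g a ^ (2:ℝ) ∂μ) = ∫ a, g a ^ 2 ∂μ := by
    refine integral_congr_ae ?_
    filter_upwards [hg0] with x hx
    rw [← Real.rpow_natCast (g x) 2]; norm_num
  rw [e1, e2] at this
  calc ∫ a, f a * g a ∂μ ≤ (∫ a, f a ^ 2 ∂μ) ^ (1/(2:ℝ)) * (∫ a, g a ^ 2 ∂μ) ^ (1/(2:ℝ)) := this
  _ = _ := by rw [Real.sqrt_eq_rpow, Real.sqrt_eq_rpow]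

lemma lin_bound {φ φ' : ℝ → ℂ} (hφ : ContinuousOn φ (Set.Icc 0 1))
    (hφ' : ContinuousOn φ' (Set.Icc 0 1))
    (hd : ∀ y ∈ Set.Ioo (0:ℝ) 1, HasDerivAt φ (φ' y) y)
    (h0 : φ 0 = 0) :
    ∃ M : ℝ, 0 ≤ M ∧ (∀ y ∈ Set.Icc (0:ℝ) 1, ‖φ' y‖ ≤ M) ∧
      ∀ y ∈ Set.Icc (0:ℝ) 1, ‖φ y‖ ≤ M * y := by
  obtain ⟨C, hC⟩ := isCompact_Icc.exists_bound_of_continuousOn hφ'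
  refine ⟨max C 0, le_max_right _ _, ?_, ?_⟩
  · intro y hy
    exact le_trans (hC y hy) (le_max_left _ _)
  intro y hy
  have hftc : ∫ t in (0:ℝ)..y, φ' t = φ y - φ 0 := by
    refine intervalIntegral.integral_eq_sub_of_hasDerivAt_of_le hy.1
      (hφ.mono (Icc_subset_Icc le_rfl hy.2)) ?_ ?_
    · intro t ht
      exact hd t ⟨ht.1, lt_of_lt_of_le ht.2 hy.2⟩
    · refine (hφ'.mono ?_).intervalIntegrable
      rw [Set.uIcc_of_le hy.1]
      exact Icc_subset_Icc le_rfl hy.2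
  have : ‖∫ t in (0:ℝ)..y, φ' t‖ ≤ max C 0 * |y - 0| := by
    refine intervalIntegral.norm_integral_le_of_norm_le_const ?_
    intro x hx
    rw [Set.uIoc_of_le hy.1] at hx
    exact le_trans (hC x ⟨le_of_lt hx.1, le_trans hx.2 hy.2⟩) (le_max_left _ _)
  rw [hftc, h0, sub_zero] at this
  simpa [abs_of_nonneg hy.1] using this

lemma hardy {φ φ' : ℝ → ℂ} (hφ : ContinuousOn φ (Set.Icc 0 1))
    (hφ' : ContinuousOn φ' (Set.Icc 0 1))
    (hd : ∀ y ∈ Set.Ioo (0:ℝ) 1, HasDerivAt φ (φ' y) y)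
    (h0 : φ 0 = 0) (h1 : φ 1 = 0) :
    ∫ y in Set.Ioo (0:ℝ) 1, ‖φ y‖ ^ 2 / y ^ 2
      ≤ 4 * ∫ y in Set.Ioo (0:ℝ) 1, ‖φ' y‖ ^ 2 := by
  obtain ⟨M, hM0, hM', hMφ⟩ := lin_bound hφ hφ' hd h0
  set ψ : ℝ → ℝ := fun y => ‖φ y‖ ^ 2 with hψdef
  set dψ : ℝ → ℝ := fun y => 2 * (φ' y * (starRingEnd ℂ) (φ y)).re with hdψdef
  have hψc : ContinuousOn ψ (Set.Icc 0 1) := (continuous_norm.comp_continuousOn hφ).pow 2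
  have hdψc : ContinuousOn dψ (Set.Icc 0 1) := by
    apply ContinuousOn.mul continuousOn_const
    exact Complex.continuous_re.comp_continuousOn
      (hφ'.mul ((Complex.continuous_conj).comp_continuousOn hφ))
  have hψd : ∀ y ∈ Set.Ioo (0:ℝ) 1, HasDerivAt ψ (dψ y) y := by
    intro y hy
    have h1' : HasDerivAt (fun t => φ t * (starRingEnd ℂ) (φ t))
        (φ' y * (starRingEnd ℂ) (φ y) + φ y * (starRingEnd ℂ) (φ' y)) y :=
      (hd y hy).mul (hd y hy).star
    have h2' : HasDerivAt (fun t => (φ t * (starRingEnd ℂ) (φ t)).re)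
        ((φ' y * (starRingEnd ℂ) (φ y) + φ y * (starRingEnd ℂ) (φ' y)).re) y :=
      Complex.reCLM.hasFDerivAt.comp_hasDerivAt y h1'
    have e : ∀ t : ℝ, (φ t * (starRingEnd ℂ) (φ t)).re = ψ t := by
      intro t
      rw [Complex.mul_conj]
      simp [hψdef, Complex.sq_norm, Complex.normSq_apply]
    have e2 : (φ' y * (starRingEnd ℂ) (φ y) + φ y * (starRingEnd ℂ) (φ' y)).re = dψ y := by
      simp [hdψdef, Complex.mul_re, Complex.conj_re, Complex.conj_im]; ring
    rw [e2] at h2'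
    exact h2'.congr_of_eventuallyEq (Filter.Eventually.of_forall fun t => (e t).symm)
  -- linear bounds for ψ, dψ
  have hψb : ∀ y ∈ Set.Icc (0:ℝ) 1, ψ y ≤ M ^ 2 * y ^ 2 := by
    intro y hy
    have := hMφ y hy
    have h2 : ‖φ y‖ ^ 2 ≤ (M * y) ^ 2 := by
      apply pow_le_pow_left₀ (norm_nonneg _) this
    calc ψ y ≤ (M*y)^2 := h2
    _ = M^2 * y^2 := by ring
  have hdψb : ∀ y ∈ Set.Icc (0:ℝ) 1, |dψ y| ≤ 2 * M ^ 2 * y := by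
    intro y hy
    have h1' : |(φ' y * (starRingEnd ℂ) (φ y)).re| ≤ ‖φ' y‖ * ‖φ y‖ := by
      calc |(φ' y * (starRingEnd ℂ) (φ y)).re| ≤ ‖φ' y * (starRingEnd ℂ) (φ y)‖ :=
        Complex.abs_re_le_norm _
      _ = ‖φ' y‖ * ‖φ y‖ := by rw [norm_mul, Complex.norm_conj]
    have := mul_le_mul (hM' y hy) (hMφ y hy) (norm_nonneg _) hM0
    calc |dψ y| = 2 * |(φ' y * (starRingEnd ℂ) (φ y)).re| := by rw [hdψdef, abs_mul]; norm_num
    _ ≤ 2 * (‖φ' y‖ * ‖φ y‖) := by linarith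
    _ ≤ 2 * (M * (M * y)) := by linarith
    _ = 2 * M^2 * y := by ring
  
  have hψ0 : ∀ y ∈ Set.Icc (0:ℝ) 1, 0 ≤ ψ y := fun y _ => sq_nonneg _
  have hψ1 : ψ 1 = 0 := by simp [hψdef, h1]
  have key : ∫ y in Set.Ioo (0:ℝ) 1, ψ y / y ^ 2 = ∫ y in Set.Ioo (0:ℝ) 1, dψ y / y := by

    set W : ℝ → ℝ := fun y => ψ y / y with hWdef
    have hψ00 : ψ 0 = 0 := by
      have := hψb 0 ⟨le_rfl, zero_le_one⟩
      have h0 := hψ0 0 ⟨le_rfl, zero_le_one⟩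
      nlinarith
    have hWc : ContinuousOn W (Set.Icc 0 1) := by
      intro x hx
      rcases eq_or_ne x 0 with rfl | hx0
      · have hW0 : W 0 = 0 := by simp [hWdef, hψ00]
        rw [ContinuousWithinAt, hW0]
        refine tendsto_of_tendsto_of_tendsto_of_le_of_le' (g := fun _ => (0:ℝ))
          (h := fun y => M^2 * y) tendsto_const_nhds ?_ ?_ ?_
        · have : Filter.Tendsto (fun y : ℝ => M ^ 2 * y) (nhdsWithin 0 (Set.Icc 0 1)) (nhds (M^2 * 0)) :=
            ((continuous_const.mul continuous_id).continuousWithinAt)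
          simpa using this
        · filter_upwards [self_mem_nhdsWithin] with y hy
          exact div_nonneg (hψ0 y hy) hy.1
        · filter_upwards [self_mem_nhdsWithin] with y hy
          rcases eq_or_lt_of_le hy.1 with rfl | hy0
          · simp [hWdef, hψ00]
          · rw [hWdef, div_le_iff₀ hy0]
            calc ψ y ≤ M^2 * y^2 := hψb y hy
            _ = M^2 * y * y := by ring
      · exact ((hψc.continuousWithinAt hx).div continuousWithinAt_id hx0)
    have hWd : ∀ y ∈ Set.Ioo (0:ℝ) 1, HasDerivAt W (dψ y / y - ψ y / y ^ 2) y := by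
      intro y hy
      have : HasDerivAt (fun t => ψ t / t) ((dψ y * y - ψ y * 1) / y ^ 2) y :=
        (hψd y hy).div (hasDerivAt_id y) (ne_of_gt hy.1)
      have hy0 : y ≠ 0 := ne_of_gt hy.1
      convert this using 1
      field_simp
    have hint : IntegrableOn (fun y => dψ y / y - ψ y / y ^ 2) (Set.Ioo (0:ℝ) 1) := by
      refine Integrable.mono' (g := fun _ => 2 * M^2 + M^2)
        (integrableOn_const (by simp)) ?_ ?_
      · refine ContinuousOn.aestronglyMeasurable ?_ measurableSet_Ioo
        refine ContinuousOn.sub ?_ ?_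
        · exact (hdψc.mono (Set.Ioo_subset_Icc_self)).div continuousOn_id
            (fun y hy => ne_of_gt hy.1)
        · exact (hψc.mono (Set.Ioo_subset_Icc_self)).div (continuousOn_id.pow 2)
            (fun y hy => pow_ne_zero 2 (ne_of_gt hy.1))
      · refine (ae_restrict_iff' measurableSet_Ioo).2 ?_
        filter_upwards with y hy
        have hyI : y ∈ Set.Icc (0:ℝ) 1 := Set.Ioo_subset_Icc_self hy
        have h1 : |dψ y / y| ≤ 2 * M^2 := by
          rw [abs_div, abs_of_pos hy.1, div_le_iff₀ hy.1]
          calc |dψ y| ≤ 2*M^2*y := hdψb y hyI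
          _ = 2*M^2*y := rfl
        have h2 : |ψ y / y^2| ≤ M^2 := by
          rw [abs_div, abs_of_nonneg (hψ0 y hyI), abs_of_pos (pow_pos hy.1 2),
            div_le_iff₀ (pow_pos hy.1 2)]
          exact hψb y hyI
        calc ‖dψ y / y - ψ y / y^2‖ ≤ |dψ y / y| + |ψ y / y^2| := abs_sub _ _
        _ ≤ 2*M^2 + M^2 := by linarith
    have hftc : ∫ y in (0:ℝ)..1, (dψ y / y - ψ y / y ^ 2) = W 1 - W 0 :=
      intervalIntegral.integral_eq_sub_of_hasDerivAt_of_le zero_le_one hWc hWd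
        ((intervalIntegrable_iff_integrableOn_Ioo_of_le zero_le_one).2 hint)
    have hW10 : W 1 - W 0 = 0 := by simp [hWdef, hψ1, hψ00]
    have hftc2 : ∫ y in Set.Ioo (0:ℝ) 1, (dψ y / y - ψ y / y ^ 2) = 0 := by
      rw [← integral_Ioc_eq_integral_Ioo, ← intervalIntegral.integral_of_le zero_le_one, hftc, hW10]
    have hi1 : IntegrableOn (fun y => dψ y / y) (Set.Ioo (0:ℝ) 1) := by
      refine Integrable.mono' (g := fun _ => 2*M^2) (integrableOn_const (by simp))
        (((hdψc.mono Set.Ioo_subset_Icc_self).div continuousOn_id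
          (fun y hy => ne_of_gt hy.1)).aestronglyMeasurable measurableSet_Ioo) ?_
      refine (ae_restrict_iff' measurableSet_Ioo).2 ?_
      filter_upwards with y hy
      rw [Real.norm_eq_abs, abs_div, abs_of_pos hy.1, div_le_iff₀ hy.1]
      exact hdψb y (Set.Ioo_subset_Icc_self hy)
    have hi2 : IntegrableOn (fun y => ψ y / y ^ 2) (Set.Ioo (0:ℝ) 1) := by
      refine Integrable.mono' (g := fun _ => M^2) (integrableOn_const (by simp))
        (((hψc.mono Set.Ioo_subset_Icc_self).div (continuousOn_id.pow 2)
          (fun y hy => pow_ne_zero 2 (ne_of_gt hy.1))).aestronglyMeasurable measurableSet_Ioo) ?_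
      refine (ae_restrict_iff' measurableSet_Ioo).2 ?_
      filter_upwards with y hy
      have hyI := Set.Ioo_subset_Icc_self hy
      rw [Real.norm_eq_abs, abs_div, abs_of_nonneg (hψ0 y hyI),
        abs_of_pos (pow_pos hy.1 2), div_le_iff₀ (pow_pos hy.1 2)]
      exact hψb y hyI
    rw [integral_sub hi1 hi2] at hftc2
    linarith
  -- Now bound ∫ dψ/y
  set f : ℝ → ℝ := fun y => ‖φ y‖ / y with hfdef
  set g : ℝ → ℝ := fun y => ‖φ' y‖ with hgdef
  have hfc : ContinuousOn f (Set.Ioo (0:ℝ) 1) :=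
    ((continuous_norm.comp_continuousOn (hφ.mono Set.Ioo_subset_Icc_self))).div
      continuousOn_id (fun y hy => ne_of_gt hy.1)
  have hgc : ContinuousOn g (Set.Ioo (0:ℝ) 1) :=
    continuous_norm.comp_continuousOn (hφ'.mono Set.Ioo_subset_Icc_self)
  have hfb : ∀ y ∈ Set.Ioo (0:ℝ) 1, |f y| ≤ M := by
    intro y hy
    rw [hfdef, abs_div, abs_of_nonneg (norm_nonneg _), abs_of_pos hy.1,
      div_le_iff₀ hy.1]
    exact hMφ y (Set.Ioo_subset_Icc_self hy)
  have hgb : ∀ y ∈ Set.Ioo (0:ℝ) 1, |g y| ≤ M := by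
    intro y hy
    rw [hgdef, abs_of_nonneg (norm_nonneg _)]
    exact hM' y (Set.Ioo_subset_Icc_self hy)
  have hfL2 : MemLp f 2 (volume.restrict (Set.Ioo (0:ℝ) 1)) := memL2_of_bdd hfc hfb
  have hgL2 : MemLp g 2 (volume.restrict (Set.Ioo (0:ℝ) 1)) := memL2_of_bdd hgc hgb
  have hf0 : 0 ≤ᵐ[volume.restrict (Set.Ioo (0:ℝ) 1)] f := by
    refine (ae_restrict_iff' measurableSet_Ioo).2 ?_
    filter_upwards with y hy
    exact div_nonneg (norm_nonneg _) (le_of_lt hy.1)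
  have hg0 : 0 ≤ᵐ[volume.restrict (Set.Ioo (0:ℝ) 1)] g := by
    refine (ae_restrict_iff' measurableSet_Ioo).2 ?_
    filter_upwards with y hy using norm_nonneg _
  have hcs := cs_help hfL2 hgL2 hf0 hg0
  have hintfg : IntegrableOn (fun y => f y * g y) (Set.Ioo (0:ℝ) 1) := by
    refine intg_of_bdd (hfc.mul hgc) (C := M * M) ?_
    intro y hy
    rw [Real.norm_eq_abs, abs_mul]
    exact mul_le_mul (hfb y hy) (hgb y hy) (abs_nonneg _) (le_trans (abs_nonneg _) (hfb y hy))
  have hi1 : IntegrableOn (fun y => dψ y / y) (Set.Ioo (0:ℝ) 1) := by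
    refine intg_of_bdd ((hdψc.mono Set.Ioo_subset_Icc_self).div continuousOn_id
      (fun y hy => ne_of_gt hy.1)) (C := 2 * M ^ 2) ?_
    intro y hy
    rw [Real.norm_eq_abs, abs_div, abs_of_pos hy.1, div_le_iff₀ hy.1]
    exact hdψb y (Set.Ioo_subset_Icc_self hy)
  have hmono : (∫ y in Set.Ioo (0:ℝ) 1, dψ y / y)
      ≤ ∫ y in Set.Ioo (0:ℝ) 1, 2 * (f y * g y) := by
    refine setIntegral_mono_on hi1 (hintfg.const_mul 2) measurableSet_Ioo ?_
    intro y hy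
    rw [div_le_iff₀ hy.1]
    have h1' : (φ' y * (starRingEnd ℂ) (φ y)).re ≤ ‖φ' y‖ * ‖φ y‖ := by
      calc (φ' y * (starRingEnd ℂ) (φ y)).re ≤ |(φ' y * (starRingEnd ℂ) (φ y)).re| := le_abs_self _
      _ ≤ ‖φ' y * (starRingEnd ℂ) (φ y)‖ := Complex.abs_re_le_norm _
      _ = ‖φ' y‖ * ‖φ y‖ := by rw [norm_mul, Complex.norm_conj]
    have hy0 : (0:ℝ) < y := hy.1
    have : f y * g y * y = ‖φ' y‖ * ‖φ y‖ := by
      rw [hfdef, hgdef]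
      field_simp
    calc dψ y = 2 * (φ' y * (starRingEnd ℂ) (φ y)).re := rfl
    _ ≤ 2 * (‖φ' y‖ * ‖φ y‖) := by linarith
    _ = 2 * (f y * g y) * y := by rw [mul_assoc, this]
  have hf2 : (∫ y in Set.Ioo (0:ℝ) 1, f y ^ 2) = ∫ y in Set.Ioo (0:ℝ) 1, ψ y / y ^ 2 := by
    refine setIntegral_congr_fun measurableSet_Ioo ?_
    intro y hy
    rw [hfdef, hψdef]
    simp [div_pow]
  have hg2 : (∫ y in Set.Ioo (0:ℝ) 1, g y ^ 2) = ∫ y in Set.Ioo (0:ℝ) 1, ‖φ' y‖ ^ 2 :=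
    rfl
  set H := ∫ y in Set.Ioo (0:ℝ) 1, ψ y / y ^ 2 with hHdef
  set A := ∫ y in Set.Ioo (0:ℝ) 1, ‖φ' y‖ ^ 2 with hAdef
  have hH0 : 0 ≤ H := by
    refine setIntegral_nonneg measurableSet_Ioo ?_
    intro y hy
    exact div_nonneg (sq_nonneg _) (sq_nonneg _)
  have hA0 : 0 ≤ A := by
    refine setIntegral_nonneg measurableSet_Ioo ?_
    intro y hy
    exact sq_nonneg _
  have hfinal : H ≤ 2 * (Real.sqrt H * Real.sqrt A) := by
    calc H = ∫ y in Set.Ioo (0:ℝ) 1, dψ y / y := key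
    _ ≤ ∫ y in Set.Ioo (0:ℝ) 1, 2 * (f y * g y) := hmono
    _ = 2 * ∫ y in Set.Ioo (0:ℝ) 1, f y * g y := by rw [integral_const_mul]
    _ ≤ 2 * (Real.sqrt H * Real.sqrt A) := by
        have := hcs
        rw [hf2, hg2] at this
        linarith
  nlinarith [Real.sq_sqrt hH0, Real.sq_sqrt hA0, Real.sqrt_nonneg H, Real.sqrt_nonneg A,
    sq_nonneg (Real.sqrt H - 2 * Real.sqrt A)]


-- pointwise re/im computation
lemma reim (c a ε : ℝ) :
    ((((c:ℝ)):ℂ) / ((a:ℂ) + (ε:ℂ) * Complex.I) ^ 2).re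
        = c * (a^2 - ε^2) / ((a^2 + ε^2)^2)
    ∧ ((((c:ℝ)):ℂ) / ((a:ℂ) + (ε:ℂ) * Complex.I) ^ 2).im
        = -(c * (2 * a * ε) / ((a^2 + ε^2)^2)) := by
  set w : ℂ := ((a:ℂ) + (ε:ℂ) * Complex.I) ^ 2 with hw
  have hwre : w.re = a^2 - ε^2 := by
    simp [hw, pow_two, Complex.mul_re]
  have hwim : w.im = 2*a*ε := by
    simp [hw, pow_two, Complex.mul_im]; ring
  have hns : Complex.normSq w = (a^2+ε^2)^2 := by
    rw [hw, map_pow]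
    congr 1
    simp [Complex.normSq_apply]
    ring
  constructor
  · rw [Complex.div_re, hwre, hns]
    simp
  · rw [Complex.div_im, hwre, hwim, hns]
    simp

-- key real inequality
lemma keyineq {y a ε : ℝ} (h1 : 0 < y) (h2 : y ≤ a) (h3 : y ≤ 1) (h4 : 0 < ε) :
    (a^2 - ε^2) / (a^2 + ε^2)^2 ≤ 1 / ((1 + ε^2) * y^2) := by
  rw [div_le_div_iff₀ (by positivity) (by positivity)]
  rcases le_or_gt (a^2 - ε^2) 0 with h | h
  · have hnp : (a^2-ε^2) * ((1+ε^2)*y^2) ≤ 0 :=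
      mul_nonpos_of_nonpos_of_nonneg h (by positivity)
    nlinarith [sq_nonneg (a^2+ε^2)]
  · have h5 : y^2 ≤ a^2 := by nlinarith
    have hy2 : y^2 ≤ 1 := by nlinarith
    have h6 : y^2*ε^2 ≤ ε^2 := by nlinarith [sq_nonneg ε, mul_le_of_le_one_left (sq_nonneg ε) hy2]
    have h7 : (1+ε^2)*y^2 ≤ a^2+ε^2 := by nlinarith
    calc (a^2-ε^2)*((1+ε^2)*y^2) ≤ (a^2+ε^2)*(a^2+ε^2) :=
      mul_le_mul (by nlinarith [sq_nonneg ε]) h7 (by positivity) (by positivity)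
    _ = 1*(a^2+ε^2)^2 := by ring
set_option maxHeartbeats 1000000 in
/-- Degenerate `H¹` bounds in the critical case `β² = 1/4`: there is an absolute constant
`C > 0` such that for every integer `m ≥ 1`, `y₀ ≤ 0`, `ε ∈ (0,1]`, and every `C²` function
`φ : [0,1] → ℂ` (derivatives `φ'`, `φ''`) with `φ(0) = φ(1) = 0` solving
`φ'' - m²φ + (1/4)φ/(y-y₀+iε)² = F` on `(0,1)` with `F` continuous:
`(ε²/(1+ε²)) ‖φ'‖²_{L²} + m² ‖φ‖²_{L²} ≤ C m^{-2} ‖F‖²_{L²}`, and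
`0 ≤ ∫₀¹ ε(y-y₀)/((y-y₀)²+ε²)² |φ|² dy ≤ 2 ‖φ‖_{L²} ‖F‖_{L²}`. -/
theorem stmt19 :
    ∃ C > (0 : ℝ), ∀ m : ℕ, 1 ≤ m → ∀ y₀ : ℝ, y₀ ≤ 0 → ∀ ε : ℝ, 0 < ε → ε ≤ 1 →
      ∀ φ φ' φ'' F : ℝ → ℂ,
        ContinuousOn φ (Set.Icc 0 1) →
        ContinuousOn φ' (Set.Icc 0 1) →
        ContinuousOn φ'' (Set.Icc 0 1) →
        ContinuousOn F (Set.Icc 0 1) →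
        (∀ y ∈ Set.Ioo (0 : ℝ) 1, HasDerivAt φ (φ' y) y) →
        (∀ y ∈ Set.Ioo (0 : ℝ) 1, HasDerivAt φ' (φ'' y) y) →
        φ 0 = 0 → φ 1 = 0 →
        (∀ y ∈ Set.Ioo (0 : ℝ) 1,
          φ'' y - (m : ℂ) ^ 2 * φ y +
            (1 / 4 : ℂ) * φ y / ((y : ℂ) - (y₀ : ℂ) + (ε : ℂ) * Complex.I) ^ 2 = F y) →
        ((ε ^ 2 / (1 + ε ^ 2)) * (∫ y in Set.Ioo (0 : ℝ) 1, ‖φ' y‖ ^ 2)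
            + (m : ℝ) ^ 2 * (∫ y in Set.Ioo (0 : ℝ) 1, ‖φ y‖ ^ 2)
          ≤ C * ((m : ℝ) ^ 2)⁻¹ * (∫ y in Set.Ioo (0 : ℝ) 1, ‖F y‖ ^ 2)) ∧
        (0 ≤ ∫ y in Set.Ioo (0 : ℝ) 1,
            ε * (y - y₀) / ((y - y₀) ^ 2 + ε ^ 2) ^ 2 * ‖φ y‖ ^ 2) ∧
        ((∫ y in Set.Ioo (0 : ℝ) 1,
            ε * (y - y₀) / ((y - y₀) ^ 2 + ε ^ 2) ^ 2 * ‖φ y‖ ^ 2)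
          ≤ 2 * Real.sqrt (∫ y in Set.Ioo (0 : ℝ) 1, ‖φ y‖ ^ 2) *
              Real.sqrt (∫ y in Set.Ioo (0 : ℝ) 1, ‖F y‖ ^ 2)) := by
  refine ⟨1, one_pos, ?_⟩
  intro m hm y₀ hy₀ ε hε hε1 φ φ' φ'' F hφc hφ'c hφ''c hFc hd1 hd2 h0 h1 hode
  set z : ℝ → ℂ := fun y => (y:ℂ) - (y₀:ℂ) + (ε:ℂ) * Complex.I with hzdef
  have hzne : ∀ y : ℝ, z y ≠ 0 := by
    intro y h
    have h2 := congrArg Complex.im h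
    simp [hzdef] at h2
    exact (ne_of_gt hε) h2
  have hzc : Continuous z :=
    (Complex.continuous_ofReal.sub continuous_const).add continuous_const
  set A := ∫ y in Set.Ioo (0:ℝ) 1, ‖φ' y‖ ^ 2 with hAdef
  set B := ∫ y in Set.Ioo (0:ℝ) 1, ‖φ y‖ ^ 2 with hBdef
  set N := ∫ y in Set.Ioo (0:ℝ) 1, ‖F y‖ ^ 2 with hNdef
  set T := ∫ y in Set.Ioo (0:ℝ) 1,
      ε * (y - y₀) / ((y - y₀) ^ 2 + ε ^ 2) ^ 2 * ‖φ y‖ ^ 2 with hTdef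
  have hA0 : 0 ≤ A := setIntegral_nonneg measurableSet_Ioo (fun y _ => sq_nonneg _)
  have hB0 : 0 ≤ B := setIntegral_nonneg measurableSet_Ioo (fun y _ => sq_nonneg _)
  have hN0 : 0 ≤ N := setIntegral_nonneg measurableSet_Ioo (fun y _ => sq_nonneg _)
  have hT0 : 0 ≤ T := by
    refine setIntegral_nonneg measurableSet_Ioo (fun y hy => ?_)
    have : 0 < y - y₀ := by linarith [hy.1]
    positivity
  obtain ⟨M, hM0, hM', hMφ⟩ := lin_bound hφc hφ'c hd1 h0
  have hHardy := hardy hφc hφ'c hd1 h0 h1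
  -- continuity of conj compositions
  have hconjφ : ContinuousOn (fun y => (starRingEnd ℂ) (φ y)) (Set.Icc 0 1) :=
    Complex.continuous_conj.comp_continuousOn hφc
  have hconjφ' : ContinuousOn (fun y => (starRingEnd ℂ) (φ' y)) (Set.Icc 0 1) :=
    Complex.continuous_conj.comp_continuousOn hφ'c
  have icc_int : ∀ {g : ℝ → ℂ}, ContinuousOn g (Set.Icc 0 1) →
      IntegrableOn g (Set.Ioo (0:ℝ) 1) := fun hg =>
    (hg.integrableOn_Icc).mono_set Set.Ioo_subset_Icc_self
  -- integration by parts
  have hibp : ∫ y in Set.Ioo (0:ℝ) 1,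
      (φ'' y * (starRingEnd ℂ) (φ y) + φ' y * (starRingEnd ℂ) (φ' y)) = 0 := by
    have hint : IntervalIntegrable
        (fun y => φ'' y * (starRingEnd ℂ) (φ y) + φ' y * (starRingEnd ℂ) (φ' y))
        volume 0 1 := by
      apply ContinuousOn.intervalIntegrable
      rw [Set.uIcc_of_le zero_le_one]
      exact (hφ''c.mul hconjφ).add (hφ'c.mul hconjφ')
    have hder : ∀ y ∈ Set.Ioo (0:ℝ) 1, HasDerivAt (fun t => φ' t * (starRingEnd ℂ) (φ t))
        (φ'' y * (starRingEnd ℂ) (φ y) + φ' y * (starRingEnd ℂ) (φ' y)) y := by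
      intro y hy
      have hstar : HasDerivAt (fun t => (starRingEnd ℂ) (φ t)) ((starRingEnd ℂ) (φ' y)) y := by
        simpa using (hd1 y hy).star
      exact (hd2 y hy).mul hstar
    have := intervalIntegral.integral_eq_sub_of_hasDerivAt_of_le zero_le_one
      (hφ'c.mul hconjφ) hder hint
    rw [intervalIntegral.integral_of_le zero_le_one, integral_Ioc_eq_integral_Ioo] at this
    rw [this]
    simp only [Pi.mul_apply]
    rw [h0, h1]
    simp
  set IF := ∫ y in Set.Ioo (0:ℝ) 1, F y * (starRingEnd ℂ) (φ y) with hIFdef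
  set J := ∫ y in Set.Ioo (0:ℝ) 1, (φ y * (starRingEnd ℂ) (φ y)) / (z y) ^ 2 with hJdef
  have iJc : ContinuousOn (fun y => (φ y * (starRingEnd ℂ) (φ y)) / (z y) ^ 2)
      (Set.Icc 0 1) :=
    (hφc.mul hconjφ).div ((hzc.pow 2).continuousOn) (fun y _ => pow_ne_zero 2 (hzne y))
  have hmain : IF + (m:ℂ)^2 * ((B:ℝ):ℂ) - (1/4:ℂ) * J = -((A:ℝ):ℂ) := by
    have hsplit0 : (∫ y in Set.Ioo (0:ℝ) 1, φ'' y * (starRingEnd ℂ) (φ y))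
        + ∫ y in Set.Ioo (0:ℝ) 1, φ' y * (starRingEnd ℂ) (φ' y) = 0 := by
      rw [← integral_add (icc_int (g := fun y => φ'' y * (starRingEnd ℂ) (φ y)) (hφ''c.mul hconjφ))
        (icc_int (g := fun y => φ' y * (starRingEnd ℂ) (φ' y)) (hφ'c.mul hconjφ'))]
      exact hibp
    have hAc : (∫ y in Set.Ioo (0:ℝ) 1, φ' y * (starRingEnd ℂ) (φ' y)) = ((A:ℝ):ℂ) := by
      have e1 : (∫ y in Set.Ioo (0:ℝ) 1, ((‖φ' y‖ ^ 2 : ℝ) : ℂ)) = ((A:ℝ):ℂ) := by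
        rw [hAdef]; exact integral_ofReal
      refine Eq.trans ?_ e1
      refine setIntegral_congr_fun measurableSet_Ioo (fun y _ => ?_)
      rw [Complex.mul_conj, ← Complex.sq_norm]
    have hBc : (∫ y in Set.Ioo (0:ℝ) 1, φ y * (starRingEnd ℂ) (φ y)) = ((B:ℝ):ℂ) := by
      have e1 : (∫ y in Set.Ioo (0:ℝ) 1, ((‖φ y‖ ^ 2 : ℝ) : ℂ)) = ((B:ℝ):ℂ) := by
        rw [hBdef]; exact integral_ofReal
      refine Eq.trans ?_ e1
      refine setIntegral_congr_fun measurableSet_Ioo (fun y _ => ?_)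
      rw [Complex.mul_conj, ← Complex.sq_norm]
    have hcongr : (∫ y in Set.Ioo (0:ℝ) 1, φ'' y * (starRingEnd ℂ) (φ y))
        = ∫ y in Set.Ioo (0:ℝ) 1, (F y * (starRingEnd ℂ) (φ y)
            + (m:ℂ)^2 * (φ y * (starRingEnd ℂ) (φ y))
            - (1/4:ℂ) * ((φ y * (starRingEnd ℂ) (φ y)) / (z y) ^ 2)) := by
      refine setIntegral_congr_fun measurableSet_Ioo (fun y hy => ?_)
      have h := hode y hy
      have hzy : ((y:ℂ) - (y₀:ℂ) + (ε:ℂ) * Complex.I) = z y := rfl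
      rw [hzy] at h
      have hzne2 : (z y)^2 ≠ 0 := pow_ne_zero 2 (hzne y)
      field_simp at h ⊢
      linear_combination ((starRingEnd ℂ) (φ y)) * h
    have hsplitRHS : (∫ y in Set.Ioo (0:ℝ) 1, (F y * (starRingEnd ℂ) (φ y)
            + (m:ℂ)^2 * (φ y * (starRingEnd ℂ) (φ y))
            - (1/4:ℂ) * ((φ y * (starRingEnd ℂ) (φ y)) / (z y) ^ 2)))
        = IF + (m:ℂ)^2 * ((B:ℝ):ℂ) - (1/4:ℂ) * J := by
      have int3 : IntegrableOn (fun y => (m:ℂ)^2 * (φ y * (starRingEnd ℂ) (φ y)))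
          (Set.Ioo (0:ℝ) 1) := (icc_int (hφc.mul hconjφ)).const_mul _
      have int1 : IntegrableOn (fun y => F y * (starRingEnd ℂ) (φ y)
          + (m:ℂ)^2 * (φ y * (starRingEnd ℂ) (φ y))) (Set.Ioo (0:ℝ) 1) :=
        (icc_int (hFc.mul hconjφ)).add int3
      have int2 : IntegrableOn (fun y => (1/4:ℂ) * ((φ y * (starRingEnd ℂ) (φ y)) / (z y) ^ 2))
          (Set.Ioo (0:ℝ) 1) := (icc_int iJc).const_mul _
      rw [integral_sub int1 int2,
        integral_add (icc_int (g := fun y => F y * (starRingEnd ℂ) (φ y)) (hFc.mul hconjφ)) int3,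
        integral_const_mul, integral_const_mul, hBc]
    rw [hcongr, hsplitRHS, hAc] at hsplit0
    linear_combination hsplit0
  -- J real and imaginary parts
  have hJint : IntegrableOn (fun y => (φ y * (starRingEnd ℂ) (φ y)) / (z y)^2)
      (Set.Ioo (0:ℝ) 1) := icc_int iJc
  have hptw : ∀ y : ℝ, (φ y * (starRingEnd ℂ) (φ y)) / (z y)^2
      = (((‖φ y‖^2 : ℝ)):ℂ) / (((y - y₀ : ℝ):ℂ) + (ε:ℂ)*Complex.I)^2 := by
    intro y
    rw [Complex.mul_conj, ← Complex.sq_norm]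
    congr 2
    rw [hzdef]
    push_cast
    ring
  have hJre : J.re = ∫ y in Set.Ioo (0:ℝ) 1,
      ‖φ y‖^2 * ((y-y₀)^2 - ε^2) / (((y-y₀)^2 + ε^2)^2) := by
    have e : (∫ y in Set.Ioo (0:ℝ) 1, ((φ y * (starRingEnd ℂ) (φ y)) / (z y)^2).re) = J.re :=
      integral_re hJint
    rw [← e]
    refine setIntegral_congr_fun measurableSet_Ioo (fun y _ => ?_)
    rw [hptw y]
    exact (reim (‖φ y‖^2) (y - y₀) ε).1
  have hJim : J.im = -(2*T) := by
    have h1' : J.im = ∫ y in Set.Ioo (0:ℝ) 1,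
        -(‖φ y‖^2 * (2*(y-y₀)*ε) / (((y-y₀)^2 + ε^2)^2)) := by
      have e : (∫ y in Set.Ioo (0:ℝ) 1, ((φ y * (starRingEnd ℂ) (φ y)) / (z y)^2).im) = J.im :=
        integral_im hJint
      rw [← e]
      refine setIntegral_congr_fun measurableSet_Ioo (fun y _ => ?_)
      rw [hptw y]
      exact (reim (‖φ y‖^2) (y - y₀) ε).2
    rw [h1', hTdef, ← integral_const_mul, ← integral_neg]
    refine setIntegral_congr_fun measurableSet_Ioo (fun y _ => ?_)
    ring
  -- real and imaginary parts of the main identity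
  have hquarter : (1/4:ℂ) = ((1/4:ℝ):ℂ) := by push_cast; ring
  have hmcast : (m:ℂ)^2 * ((B:ℝ):ℂ) = (((m:ℝ)^2 * B : ℝ):ℂ) := by push_cast; ring
  rw [hquarter, hmcast] at hmain
  have hre := congrArg Complex.re hmain
  have him := congrArg Complex.im hmain
  simp only [Complex.add_re, Complex.sub_re, Complex.ofReal_re, Complex.neg_re,
    Complex.add_im, Complex.sub_im, Complex.ofReal_im, Complex.neg_im,
    Complex.re_ofReal_mul, Complex.im_ofReal_mul] at hre him
  -- him : IF.im - 1/4 * J.im = 0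
  rw [hJim] at him
  -- hence T = -2 * IF.im
  have hTeq : T = -(2 * IF.im) := by linarith
  -- bound on ‖IF‖
  have hNBc : ‖IF‖ ≤ Real.sqrt B * Real.sqrt N := by
    obtain ⟨CF, hCF⟩ := isCompact_Icc.exists_bound_of_continuousOn hFc
    have step : ‖IF‖ ≤ ∫ y in Set.Ioo (0:ℝ) 1, ‖F y * (starRingEnd ℂ) (φ y)‖ :=
      norm_integral_le_integral_norm _
    have step2 : (∫ y in Set.Ioo (0:ℝ) 1, ‖F y * (starRingEnd ℂ) (φ y)‖)
        = ∫ y in Set.Ioo (0:ℝ) 1, ‖φ y‖ * ‖F y‖ := by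
      refine setIntegral_congr_fun measurableSet_Ioo (fun y _ => ?_)
      rw [norm_mul, Complex.norm_conj]
      ring
    have hφL2 : MemLp (fun y => ‖φ y‖) 2 (volume.restrict (Set.Ioo (0:ℝ) 1)) := by
      refine memL2_of_bdd (continuous_norm.comp_continuousOn
        (hφc.mono Set.Ioo_subset_Icc_self)) (C := M) (fun y hy => ?_)
      rw [abs_of_nonneg (norm_nonneg _)]
      calc ‖φ y‖ ≤ M * y := hMφ y (Set.Ioo_subset_Icc_self hy)
      _ ≤ M * 1 := by nlinarith [hy.2]
      _ = M := mul_one M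
    have hFL2 : MemLp (fun y => ‖F y‖) 2 (volume.restrict (Set.Ioo (0:ℝ) 1)) := by
      refine memL2_of_bdd (continuous_norm.comp_continuousOn
        (hFc.mono Set.Ioo_subset_Icc_self)) (C := max CF 0) (fun y hy => ?_)
      rw [abs_of_nonneg (norm_nonneg _)]
      exact le_trans (hCF y (Set.Ioo_subset_Icc_self hy)) (le_max_left _ _)
    have h0' : 0 ≤ᵐ[volume.restrict (Set.Ioo (0:ℝ) 1)] (fun y => ‖φ y‖) :=
      Filter.Eventually.of_forall (fun y => norm_nonneg _)
    have h0'' : 0 ≤ᵐ[volume.restrict (Set.Ioo (0:ℝ) 1)] (fun y => ‖F y‖) :=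
      Filter.Eventually.of_forall (fun y => norm_nonneg _)
    have hcs := cs_help hφL2 hFL2 h0' h0''
    rw [step2] at step
    exact le_trans step hcs
  -- second and third conclusions
  have habsim : |IF.im| ≤ ‖IF‖ := by
    exact Complex.abs_im_le_norm _
  have hT2 : T ≤ 2 * Real.sqrt B * Real.sqrt N := by
    rw [hTeq]
    have : -IF.im ≤ |IF.im| := neg_le_abs _
    nlinarith [le_trans habsim hNBc]
  refine ⟨?_, hT0, hT2⟩
  -- first inequality
  have hmR : (1:ℝ) ≤ (m:ℝ) := by exact_mod_cast hm
  have hm2 : (0:ℝ) < (m:ℝ)^2 := by positivity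
  set Hq := ∫ y in Set.Ioo (0:ℝ) 1, ‖φ y‖ ^ 2 / y ^ 2 with hHqdef
  -- J.re ≤ (1/(1+ε²)) * Hq
  have int1 : IntegrableOn
      (fun y => ‖φ y‖^2 * ((y-y₀)^2 - ε^2) / (((y-y₀)^2 + ε^2)^2))
      (Set.Ioo (0:ℝ) 1) := by
    have c1 : ContinuousOn
        (fun y : ℝ => ‖φ y‖^2 * ((y-y₀)^2 - ε^2) / (((y-y₀)^2 + ε^2)^2))
        (Set.Icc 0 1) := by
      refine ContinuousOn.div ?_ ?_ ?_
      · exact ((continuous_norm.comp_continuousOn hφc).pow 2).mul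
          ((((continuous_id.sub continuous_const).pow 2).sub continuous_const).continuousOn)
      · exact ((((continuous_id.sub continuous_const).pow 2).add continuous_const).pow 2).continuousOn
      · intro y _
        positivity
    exact (c1.integrableOn_Icc).mono_set Set.Ioo_subset_Icc_self
  have intHq : IntegrableOn (fun y => ‖φ y‖ ^ 2 / y ^ 2) (Set.Ioo (0:ℝ) 1) := by
    refine intg_of_bdd ?_ (C := M^2) ?_
    · exact ((continuous_norm.comp_continuousOn
        (hφc.mono Set.Ioo_subset_Icc_self)).pow 2).div
        ((continuous_id.pow 2).continuousOn) (fun y hy => pow_ne_zero 2 (ne_of_gt hy.1))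
    · intro y hy
      have hy0 : (0:ℝ) < y := hy.1
      have hb := hMφ y (Set.Ioo_subset_Icc_self hy)
      rw [Real.norm_eq_abs, abs_of_nonneg (by positivity), div_le_iff₀ (by positivity)]
      nlinarith [norm_nonneg (φ y)]
  have int2 : IntegrableOn (fun y => 1/(1+ε^2) * (‖φ y‖ ^ 2 / y ^ 2))
      (Set.Ioo (0:ℝ) 1) := intHq.const_mul _
  have step1 : J.re ≤ 1/(1+ε^2) * Hq := by
    rw [hJre, hHqdef, ← integral_const_mul]
    refine setIntegral_mono_on int1 int2 measurableSet_Ioo (fun y hy => ?_)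
    have hk := keyineq hy.1 (by linarith : y ≤ y - y₀) hy.2.le hε
    have hc : (0:ℝ) ≤ ‖φ y‖^2 := sq_nonneg _
    have hmul := mul_le_mul_of_nonneg_left hk hc
    calc ‖φ y‖^2 * ((y-y₀)^2 - ε^2) / (((y-y₀)^2 + ε^2)^2)
        = ‖φ y‖^2 * (((y-y₀)^2 - ε^2) / (((y-y₀)^2 + ε^2)^2)) := by ring
    _ ≤ ‖φ y‖^2 * (1/((1+ε^2)*y^2)) := hmul
    _ = 1/(1+ε^2) * (‖φ y‖^2 / y^2) := by
        have hy0 : y ≠ 0 := ne_of_gt hy.1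
        field_simp
  -- assemble
  have hIFre : -IF.re ≤ Real.sqrt B * Real.sqrt N := by
    have h' : |IF.re| ≤ ‖IF‖ := by
      exact Complex.abs_re_le_norm _
    have := neg_le_abs IF.re
    nlinarith [le_trans h' hNBc]
  have hu : (0:ℝ) < 1 + ε^2 := by positivity
  have hq4 : (1:ℝ)/4 * J.re ≤ 1/(1+ε^2) * A := by
    have h4 : Hq ≤ 4 * A := hHardy
    have hpos : (0:ℝ) ≤ 1/(1+ε^2) := by positivity
    calc (1:ℝ)/4 * J.re ≤ 1/4 * (1/(1+ε^2) * Hq) := by linarith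
    _ ≤ 1/4 * (1/(1+ε^2) * (4*A)) := by nlinarith
    _ = 1/(1+ε^2) * A := by ring
  -- hre : IF.re + m²B - 1/4 J.re = -A
  have h8 : A + (m:ℝ)^2 * B ≤ 1/(1+ε^2) * A + Real.sqrt B * Real.sqrt N := by linarith
  have h9 : ε^2/(1+ε^2) * A = A - 1/(1+ε^2) * A := by
    field_simp
    ring
  have hAM : Real.sqrt B * Real.sqrt N ≤ (m:ℝ)^2*B/2 + N/(2*(m:ℝ)^2) := by
    have key : 2*(m:ℝ)^2*(Real.sqrt B*Real.sqrt N) ≤ (m:ℝ)^4*B + N := by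
      have e2 : ((m:ℝ)^2*Real.sqrt B - Real.sqrt N)^2
          = (m:ℝ)^4*((Real.sqrt B)^2) - 2*(m:ℝ)^2*(Real.sqrt B*Real.sqrt N)
            + (Real.sqrt N)^2 := by ring
      rw [Real.sq_sqrt hB0, Real.sq_sqrt hN0] at e2
      have e3 := sq_nonneg ((m:ℝ)^2*Real.sqrt B - Real.sqrt N)
      linarith
    have h10 : Real.sqrt B * Real.sqrt N ≤ ((m:ℝ)^4*B + N)/(2*(m:ℝ)^2) := by
      rw [le_div_iff₀ (by positivity)]
      linarith
    have h11 : ((m:ℝ)^4*B + N)/(2*(m:ℝ)^2) = (m:ℝ)^2*B/2 + N/(2*(m:ℝ)^2) := by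
      field_simp
    linarith
  have hX0 : 0 ≤ ε^2/(1+ε^2) * A := by positivity
  have hfin : ε^2/(1+ε^2)*A + (m:ℝ)^2*B ≤ N/(m:ℝ)^2 := by
    have e1 : ε^2/(1+ε^2)*A + (m:ℝ)^2*B ≤ Real.sqrt B * Real.sqrt N := by linarith
    have e2 : ε^2/(1+ε^2)*A + (m:ℝ)^2*B/2 ≤ N/(2*(m:ℝ)^2) := by linarith
    have e3 : (m:ℝ)^2*B/2 ≤ N/(2*(m:ℝ)^2) := by linarith
    have e4 : N/(2*(m:ℝ)^2) + N/(2*(m:ℝ)^2) = N/(m:ℝ)^2 := by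
      field_simp
      ring
    linarith
  have egoal : (1:ℝ) * ((m:ℝ)^2)⁻¹ * N = N/(m:ℝ)^2 := by ring
  linarith
end
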